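/- arXiv:0906.4571 — 5 statements merged into one kernel-verified Lean document; each statement's English description precedes it below -/
import Mathlib

section
/- For every integer q > 2 with q ≠ 4, the degree of Q(sin(2π/q)) over Q equals (1/2)·φ(K), where K = 4q / gcd(4q, 4−q). -/
set_option maxHeartbeats 1000000
set_option synthInstance.maxHeartbeats 1000000

open Real IntermediateField Polynomial

lemma aux_c (n : ℕ) (hn : 2 < n) (a : ℕ) (ha : a.Coprime n) (z : ℂ)
    (hz : z = Complex.ofReal (Real.cos (2 * π * a / n))) :
    Module.finrank ℚ (adjoin ℚ {z} : IntermediateField ℚ ℂ) * 2 = n.totient := by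
  have hn0 : n ≠ 0 := by omega
  have hnC : (n : ℂ) ≠ 0 := by exact_mod_cast hn0
  set θ : ℝ := 2 * π * a / n with hθ
  set ζ : ℂ := Complex.exp (2 * π * Complex.I * (a / n)) with hζ
  have hprim : IsPrimitiveRoot ζ n := Complex.isPrimitiveRoot_exp_of_coprime a n hn0 ha
  have hζne : ζ ≠ 0 := Complex.exp_ne_zero _
  have hζeq : ζ = Complex.exp ((θ : ℂ) * Complex.I) := by
    rw [hζ, hθ]
    push_cast
    ring_nf
  have hcos : z = (ζ + ζ⁻¹) / 2 := by
    rw [hz, Complex.ofReal_cos, Complex.cos, hζeq, ← Complex.exp_neg]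
    ring_nf
  have hζint : IsIntegral ℚ ζ := (hprim.isIntegral (by omega)).tower_top
  have hzmem : z ∈ (adjoin ℚ {ζ} : IntermediateField ℚ ℂ) := by
    rw [hcos]
    have h1 : ζ ∈ (adjoin ℚ {ζ} : IntermediateField ℚ ℂ) := mem_adjoin_simple_self ℚ ζ
    have h2 : (2 : ℂ) ∈ (adjoin ℚ {ζ} : IntermediateField ℚ ℂ) := by
      exact_mod_cast _root_.natCast_mem (adjoin ℚ {ζ}) 2
    exact div_mem (add_mem h1 (inv_mem h1)) h2
  set F : IntermediateField ℚ ℂ := adjoin ℚ {z} with hF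
  have hrs : (adjoin F {ζ}).restrictScalars ℚ = adjoin ℚ {ζ} := by
    erw [adjoin_adjoin_left]
    apply le_antisymm
    · exact adjoin_le_iff.mpr (by
        rintro x (rfl | rfl)
        · exact hzmem
        · exact mem_adjoin_simple_self ℚ ζ)
    · exact adjoin.mono _ _ _ (by intro x hx; exact Set.mem_union_right _ hx)
  have him : ζ.im = Real.sin θ := by
    rw [hζeq]
    exact_mod_cast Complex.exp_ofReal_mul_I_im θ
  have hsin : Real.sin θ ≠ 0 := by
    intro h
    rw [Real.sin_eq_zero_iff] at h
    obtain ⟨k, hk⟩ := h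
    rw [hθ] at hk
    have hπ : (π : ℝ) ≠ 0 := Real.pi_ne_zero
    have hnR : (n : ℝ) ≠ 0 := by exact_mod_cast hn0
    have hk2 : (k : ℝ) * π * n = 2 * π * a := by
      field_simp at hk
      linear_combination π * hk
    have h3 : π * ((k : ℝ) * n - 2 * a) = 0 := by linear_combination hk2
    have h4 : (k : ℝ) * n - 2 * a = 0 := by
      rcases mul_eq_zero.mp h3 with h | h
      · exact absurd h hπ
      · exact h
    have hint : (k * n : ℤ) = 2 * a := by
      have : (k : ℝ) * n = 2 * a := by linarith
      exact_mod_cast this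
    have hdvd : (n : ℤ) ∣ 2 * a := ⟨k, by linarith [hint]⟩
    have hle : (n : ℤ) ∣ 2 := by
      have hcop : IsCoprime (n : ℤ) (a : ℤ) := by
        rw [Int.isCoprime_iff_gcd_eq_one]
        simpa [Int.gcd] using ha.symm
      exact hcop.dvd_of_dvd_mul_right hdvd
    have : (n : ℤ) ≤ 2 := Int.le_of_dvd (by norm_num) hle
    omega
  have hζnotF : ζ ∉ F := by
    intro hmem
    have hle : F ≤ (⊤ : IntermediateField ℚ ℝ).map ((Complex.ofRealAm).restrictScalars ℚ) := by
      rw [hF]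
      apply adjoin_le_iff.mpr
      intro x hx
      rw [Set.mem_singleton_iff] at hx
      subst hx
      exact ⟨Real.cos θ, trivial, by rw [hz]; rfl⟩
    obtain ⟨y, -, hy⟩ := hle hmem
    apply hsin
    rw [← him, ← hy]
    exact Complex.ofReal_im y
  have hζintF : IsIntegral F ζ := hζint.tower_top
  -- minpoly of ζ over F
  set c : F := ⟨z, mem_adjoin_simple_self ℚ z⟩ with hc
  set p : Polynomial F := C 1 * X ^ 2 + C (-(2 * c)) * X + C 1 with hp
  have hpdeg : p.degree = 2 := Polynomial.degree_quadratic one_ne_zero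
  have hpne : p ≠ 0 := fun h => by rw [h, Polynomial.degree_zero] at hpdeg; cases hpdeg
  have hproot : (Polynomial.aeval ζ) p = 0 := by
    rw [hp]
    simp only [map_add, map_mul, map_pow, map_one, map_neg, map_ofNat, aeval_X, aeval_C]
    have hac : (algebraMap F ℂ) c = z := rfl
    rw [hac, hcos]
    field_simp
    ring
  have hmindeg : (minpoly F ζ).natDegree = 2 := by
    have hub : (minpoly F ζ).degree ≤ p.degree :=
      minpoly.degree_le_of_ne_zero F ζ hpne hproot
    have hub' : (minpoly F ζ).natDegree ≤ 2 := by
      apply Polynomial.natDegree_le_iff_degree_le.mpr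
      refine le_trans hub (le_of_eq ?_)
      rw [hpdeg]; norm_cast
    have hlb : 2 ≤ (minpoly F ζ).natDegree := by
      rw [minpoly.two_le_natDegree_iff hζintF]
      intro hmem
      obtain ⟨y, hy⟩ := hmem
      exact hζnotF (hy ▸ y.2)
    omega
  have h2 : Module.finrank F (adjoin F {ζ} : IntermediateField F ℂ) = 2 := by
    rw [adjoin.finrank hζintF, hmindeg]
  have htot : Module.finrank ℚ (adjoin ℚ {ζ} : IntermediateField ℚ ℂ) = n.totient := by
    rw [adjoin.finrank hζint, ← Polynomial.cyclotomic_eq_minpoly_rat hprim (by omega),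
      Polynomial.natDegree_cyclotomic]
  have hcarrier : Module.finrank ℚ ((adjoin F {ζ}).restrictScalars ℚ)
      = Module.finrank ℚ (adjoin F {ζ} : IntermediateField F ℂ) := rfl
  calc Module.finrank ℚ F * 2
      = Module.finrank ℚ F * Module.finrank F (adjoin F {ζ} : IntermediateField F ℂ) := by
        rw [h2]
    _ = Module.finrank ℚ (adjoin F {ζ} : IntermediateField F ℂ) :=
        Module.finrank_mul_finrank ℚ F _
    _ = n.totient := by rw [← hcarrier, hrs, htot]

lemma aux_r (n : ℕ) (hn : 2 < n) (a : ℕ) (ha : a.Coprime n) (x : ℝ)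
    (hx : x = Real.cos (2 * π * a / n)) :
    Module.finrank ℚ (adjoin ℚ {x} : IntermediateField ℚ ℝ) = n.totient / 2 := by
  set f : ℝ →ₐ[ℚ] ℂ := Complex.ofRealAm.restrictScalars ℚ with hf
  have hmap : (adjoin ℚ {x} : IntermediateField ℚ ℝ).map f
      = adjoin ℚ {(x : ℂ)} := by
    rw [adjoin_map, Set.image_singleton]
    rfl
  have hfr : Module.finrank ℚ (adjoin ℚ {x} : IntermediateField ℚ ℝ)
      = Module.finrank ℚ (adjoin ℚ {(x : ℂ)} : IntermediateField ℚ ℂ) := by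
    rw [← hmap]
    exact (equivMap (adjoin ℚ {x} : IntermediateField ℚ ℝ) f).toLinearEquiv.finrank_eq
  have h2 := aux_c n hn a ha (x : ℂ) (by rw [hx])
  omega

theorem sin_field_degree (q : ℕ) (hq : 2 < q) (hq4 : q ≠ 4) (K : IntermediateField ℚ ℝ)
    (hK : K = adjoin ℚ {Real.sin (2 * π / q)}) :
    Module.finrank ℚ K = Nat.totient (4 * q / Int.gcd (4 * q) (4 - (q : ℤ))) / 2 := by
  have hq0 : q ≠ 0 := by omega
  set g : ℕ := Int.gcd (4 * q) (4 - (q : ℤ)) with hg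
  set n : ℕ := 4 * q / g with hn'
  have hgd1 : (g : ℤ) ∣ 4 * q := Int.gcd_dvd_left _ _
  have hgd2 : (g : ℤ) ∣ 4 - (q : ℤ) := Int.gcd_dvd_right _ _
  have hgpos : 0 < g := Int.gcd_pos_of_ne_zero_left _ (by positivity)
  have hg16 : (g : ℤ) ∣ 16 := by
    have : (16 : ℤ) = 4 * (4 - (q : ℤ)) + (4 * q) := by push_cast; ring
    rw [this]
    exact dvd_add (Dvd.dvd.mul_left hgd2 4) hgd1
  have hg16' : g ≤ 16 := by
    have := Int.le_of_dvd (by norm_num) hg16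
    exact_mod_cast this
  have hgdN : g ∣ 4 * q := by
    have : (g : ℤ) ∣ ((4 * q : ℕ) : ℤ) := by push_cast; exact hgd1
    exact_mod_cast this
  have hmul : n * g = 4 * q := Nat.div_mul_cancel hgdN
  have hn : 2 < n := by
    by_cases hq12 : 12 ≤ q
    · by_contra h
      have h1 : n * g ≤ 2 * 16 := Nat.mul_le_mul (by omega) hg16'
      omega
    · interval_cases q <;> simp_all <;> decide
  -- integer numerator
  set a : ℤ := (4 - (q : ℤ)) / g with ha'
  have haeq : a * g = 4 - (q : ℤ) := Int.ediv_mul_cancel hgd2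
  have hmulZ : (n : ℤ) * g = 4 * q := by exact_mod_cast hmul
  have hcop : Int.gcd a (n : ℤ) = 1 := by
    have h1 : Int.gcd (a * g) ((n : ℤ) * g) = Int.gcd a n * g := by
      simpa using Int.gcd_mul_right a (g : ℤ) (n : ℤ)
    rw [haeq, hmulZ] at h1
    have h2 : Int.gcd (4 - (q : ℤ)) (4 * q) = g := by rw [hg, Int.gcd_comm]
    rw [h2] at h1
    exact Nat.eq_of_mul_eq_mul_right hgpos (by omega)
  have hnne : (0 : ℤ) < (n : ℤ) := by exact_mod_cast (by omega : 0 < n)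
  set b : ℕ := (a % (n : ℤ)).toNat with hb'
  have hbeq : (b : ℤ) = a % (n : ℤ) := Int.toNat_of_nonneg (Int.emod_nonneg a (by omega))
  have hbcop : b.Coprime n := by
    have hc1 : IsCoprime a (n : ℤ) := Int.isCoprime_iff_gcd_eq_one.mpr hcop
    have hc2 : IsCoprime (a % (n : ℤ)) (n : ℤ) := by
      rw [Int.emod_def, sub_eq_add_neg, ← mul_neg]
      exact hc1.add_mul_left_left _
    have : Int.gcd (a % (n : ℤ)) (n : ℤ) = 1 := Int.isCoprime_iff_gcd_eq_one.mp hc2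
    rwa [← hbeq, Int.gcd_natCast_natCast] at this
  -- the trig identity
  have hqR : (q : ℝ) ≠ 0 := by exact_mod_cast hq0
  have hnR : (n : ℝ) ≠ 0 := by positivity
  have hgR : (g : ℝ) ≠ 0 := by positivity
  have htrig : Real.sin (2 * π / q) = Real.cos (2 * π * b / n) := by
    rw [← Real.cos_pi_div_two_sub]
    have hstep1 : π / 2 - 2 * π / q = 2 * π * (-a : ℝ) / n := by
      have key : ((q : ℝ) - 4) * n = (-a : ℝ) * (4 * q) := by
        have : ((q : ℝ) - 4) * n * g = (-a : ℝ) * (4 * q) * g := by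
          have e1 : ((q : ℤ) - 4) = (-a) * g := by linarith [haeq]
          have e2 : ((q : ℝ) - 4) = (-a : ℝ) * g := by exact_mod_cast congrArg Int.cast e1
          have e3 : ((n : ℝ)) * g = 4 * q := by exact_mod_cast hmul
          calc ((q : ℝ) - 4) * n * g = ((q : ℝ) - 4) * (n * g) := by ring
            _ = ((q : ℝ) - 4) * (4 * q) := by rw [e3]
            _ = (-a : ℝ) * (4 * q) * g := by rw [e2]; ring
        exact mul_right_cancel₀ hgR this
      field_simp
      linear_combination key
    rw [hstep1]
    have hstep2 : 2 * π * (-a : ℝ) / n = -(2 * π * a / n) := by ring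
    rw [hstep2, Real.cos_neg]
    set m : ℤ := a / (n : ℤ) with hm'
    have hdm : (n : ℤ) * m + b = a := by rw [hbeq]; exact Int.mul_ediv_add_emod a n
    have hdmR : (n : ℝ) * m + b = a := by exact_mod_cast hdm
    have hstep3 : 2 * π * (a : ℝ) / n = 2 * π * b / n + (m : ℝ) * (2 * π) := by
      rw [div_add' _ _ _ hnR, div_eq_div_iff hnR hnR]
      linear_combination (-2 * π * (n:ℝ)) * hdmR
    rw [hstep3, Real.cos_add_int_mul_two_pi]
  rw [hK, htrig]
  exact aux_r n hn b hbcop _ rfl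
end

section
/- If q is a positive integer divisible by 4, then Q(tan²(π/q)) = Q(tan(π/q)). -/
open Real IntermediateField

set_option maxHeartbeats 1000000 in
theorem tan_sq_field_eq (q : ℕ) (hq : 0 < q) (h4 : 4 ∣ q) :
    adjoin ℚ {Real.tan (π / q) ^ 2} = adjoin ℚ {Real.tan (π / q)} := by
  obtain ⟨m, hm⟩ := h4
  have hm0 : 0 < m := by omega
  set θ : ℝ := π / q with hθ
  set t : ℝ := Real.tan θ with htdef
  set F : IntermediateField ℚ ℝ := adjoin ℚ {t ^ 2} with hF
  have hqR : (0:ℝ) < (q:ℝ) := by exact_mod_cast hq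
  have hθpos : 0 < θ := div_pos pi_pos hqR
  have hmθ : (m:ℝ) * θ = π / 4 := by
    rw [hθ]
    have : (q:ℝ) = 4 * m := by exact_mod_cast hm
    rw [this]
    field_simp
  have hcos : ∀ k : ℕ, k ≤ m → 0 < Real.cos (k * θ) := by
    intro k hk
    apply Real.cos_pos_of_mem_Ioo
    constructor
    · have : (0:ℝ) ≤ k * θ := by positivity
      linarith [pi_pos]
    · have h1 : (k:ℝ) * θ ≤ (m:ℝ) * θ := by
        apply mul_le_mul_of_nonneg_right _ hθpos.le
        exact_mod_cast hk
      rw [hmθ] at h1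
      linarith [pi_pos]
  have ht2F : t ^ 2 ∈ F := subset_adjoin ℚ _ rfl
  have hcθ : Real.cos θ ≠ 0 := by
    have := hcos 1 hm0
    simpa using this.ne'
  have key : ∀ n : ℕ, n ≤ m → ∃ a ∈ F, Real.tan (n * θ) = t * a := by
    intro n
    induction n with
    | zero => exact fun _ => ⟨0, F.zero_mem, by simp⟩
    | succ n ih =>
      intro hn1
      obtain ⟨a, haF, ha⟩ := ih (by omega)
      have hC : Real.cos (n * θ) ≠ 0 := (hcos n (by omega)).ne'
      have hC1 : Real.cos ((n + 1 : ℕ) * θ) ≠ 0 := (hcos (n + 1) hn1).ne'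
      -- sin(nθ) * cos θ = sin θ * a * cos(nθ)
      have hSc : Real.sin (n * θ) * Real.cos θ = Real.sin θ * a * Real.cos (n * θ) := by
        rw [htdef, Real.tan_eq_sin_div_cos, Real.tan_eq_sin_div_cos] at ha
        field_simp at ha
        linarith [ha]
      have hsplit : ((n + 1 : ℕ) : ℝ) * θ = n * θ + θ := by push_cast; ring
      have hkey : Real.cos ((n + 1 : ℕ) * θ) * Real.cos θ
          = Real.cos (n * θ) * (Real.cos θ ^ 2 - a * Real.sin θ ^ 2) := by
        rw [hsplit, Real.cos_add]
        linear_combination (-Real.sin θ) * hSc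
      have hden : Real.cos θ ^ 2 - a * Real.sin θ ^ 2 ≠ 0 := by
        intro h
        rw [h, mul_zero] at hkey
        exact mul_ne_zero hC1 hcθ hkey
      have hden2 : 1 - a * t ^ 2 ≠ 0 := by
        rw [htdef, Real.tan_eq_sin_div_cos]
        intro h
        apply hden
        field_simp at h
        linarith [h]
      refine ⟨(a + 1) / (1 - a * t ^ 2), F.div_mem (F.add_mem haF F.one_mem)
        (F.sub_mem F.one_mem (F.mul_mem haF ht2F)), ?_⟩
      rw [hsplit, Real.tan_eq_sin_div_cos, Real.sin_add, Real.cos_add, htdef,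
        Real.tan_eq_sin_div_cos]
      rw [hsplit, Real.cos_add] at hC1
      have hden2' : (1:ℝ) - a * (Real.sin θ / Real.cos θ) ^ 2 ≠ 0 := by
        rw [htdef, Real.tan_eq_sin_div_cos] at hden2; exact hden2
      field_simp
      rw [div_eq_div_iff (by intro h; apply hC1; linarith) (by intro h; apply hden; linarith)]
      linear_combination ((Real.cos θ ^ 2 + Real.sin θ ^ 2)) * hSc
  obtain ⟨a, haF, ha⟩ := key m le_rfl
  rw [hmθ, Real.tan_pi_div_four] at ha
  have htpos : 0 < t := by
    apply Real.tan_pos_of_pos_of_lt_pi_div_two hθpos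
    have h1 : (1:ℝ) * θ ≤ (m:ℝ) * θ := by
      apply mul_le_mul_of_nonneg_right _ hθpos.le
      exact_mod_cast hm0
    rw [hmθ] at h1
    linarith [pi_pos]
  have ha0 : a ≠ 0 := by
    intro h; rw [h, mul_zero] at ha; exact one_ne_zero ha
  have htF : t ∈ F := by
    have : t = a⁻¹ := by
      field_simp
      linarith [ha]
    rw [this]
    exact F.inv_mem (by assumption)
  have h1 : t ^ 2 ∈ adjoin ℚ {t} := pow_mem (subset_adjoin ℚ _ (Set.mem_singleton t)) 2
  apply le_antisymm
  · rw [adjoin_le_iff, Set.singleton_subset_iff]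
    exact h1
  · rw [adjoin_le_iff, Set.singleton_subset_iff]
    exact htF
end

section
/- Let q > 2 be an integer with q ≠ 4. If 8 divides q then Q(cos(2π/q)) = Q(sin(2π/q)); if q ≡ 4 mod 8 then Q(sin(2π/q)) is a subfield of Q(cos(2π/q)) of index two; if 4 does not divide q then Q(cos(2π/q)) is a subfield of Q(sin(2π/q)) of index two. -/
set_option maxHeartbeats 1000000
set_option synthInstance.maxHeartbeats 400000
open Real IntermediateField

lemma aeval_mem_adjoin {x : ℝ} (p : Polynomial ℚ) :
    Polynomial.aeval x p ∈ adjoin ℚ {x} := by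
  have h1 : x ∈ adjoin ℚ {x} := mem_adjoin_simple_self ℚ x
  have := IntermediateField.algebra_adjoin_le_adjoin ℚ ({x} : Set ℝ)
  apply this
  rw [Algebra.adjoin_singleton_eq_range_aeval]
  exact ⟨p, rfl⟩

lemma cos_int_mul_mem (k : ℤ) (x : ℝ) : Real.cos (k * x) ∈ adjoin ℚ {Real.cos x} := by
  have := Polynomial.Chebyshev.T_real_cos x k
  rw [← this, ← Polynomial.Chebyshev.aeval_T (R := ℚ)]
  exact aeval_mem_adjoin _

lemma cos_frac_mem (k : ℤ) (n : ℕ) (hn : n ≠ 0) :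
    Real.cos (2 * π * k / n) ∈ adjoin ℚ {Real.cos (2 * π / n)} := by
  have : (2 * π * k / n : ℝ) = k * (2 * π / n) := by ring
  rw [this]; exact cos_int_mul_mem k _

lemma cos_frac_le (k : ℤ) (n : ℕ) :
    adjoin ℚ {Real.cos (2 * π * k / n)} ≤ adjoin ℚ {Real.cos (2 * π / n)} := by
  rw [adjoin_simple_le_iff]
  have : (2 * π * k / n : ℝ) = k * (2 * π / n) := by ring
  rw [this]; exact cos_int_mul_mem k _

lemma cos_dvd_le (m n : ℕ) (hm : m ≠ 0) (hn : n ≠ 0) (h : m ∣ n) :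
    adjoin ℚ {Real.cos (2 * π / m)} ≤ adjoin ℚ {Real.cos (2 * π / n)} := by
  obtain ⟨c, rfl⟩ := h
  have hc : 0 < c := Nat.pos_of_ne_zero (by rintro rfl; simp at hn)
  have : (2 * π / m : ℝ) = 2 * π * (c : ℤ) / (m * c : ℕ) := by
    push_cast
    field_simp
  rw [this]
  exact cos_frac_le _ _

lemma cos_coprime_eq (k : ℤ) (n : ℕ) (hn : n ≠ 0) (h : IsCoprime k (n : ℤ)) :
    adjoin ℚ {Real.cos (2 * π * k / n)} = adjoin ℚ {Real.cos (2 * π / n)} := by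
  refine le_antisymm (cos_frac_le k n) ?_
  rw [adjoin_simple_le_iff]
  obtain ⟨a, b, hab⟩ := h
  -- a * k + b * n = 1, so cos (2π/n) = cos (a * (2πk/n) + b * 2π)
  have key : (2 * π / n : ℝ) = (a : ℝ) * (2 * π * k / n) - ((-b : ℤ) : ℝ) * (2 * π) := by
    have hn' : (n : ℝ) ≠ 0 := Nat.cast_ne_zero.mpr hn
    have h1 : (a : ℝ) * k + b * n = 1 := by exact_mod_cast congrArg (Int.cast : ℤ → ℝ) hab
    push_cast
    field_simp
    linear_combination (-1:ℝ) * h1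
  rw [key, Real.cos_sub_int_mul_two_pi]
  exact cos_int_mul_mem a _

lemma sin_eq_cos' (q n : ℕ) (k : ℤ) (hq : q ≠ 0) (hn : n ≠ 0)
    (h : 4 * (q:ℤ) * k = n * ((q:ℤ) - 4)) :
    Real.sin (2 * π / q) = Real.cos (2 * π * k / n) := by
  rw [← Real.cos_pi_div_two_sub]
  congr 1
  have hqR : (q:ℝ) ≠ 0 := Nat.cast_ne_zero.mpr hq
  have hnR : (n:ℝ) ≠ 0 := Nat.cast_ne_zero.mpr hn
  have hR : (4:ℝ) * q * k = n * ((q:ℝ) - 4) := by exact_mod_cast h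
  field_simp
  linear_combination (-1:ℝ) * hR

lemma index_two {a b : ℝ} (hle : adjoin ℚ {a} ≤ adjoin ℚ {b})
    (hB : 0 < Module.finrank ℚ (adjoin ℚ {b}))
    (hr : 2 * Module.finrank ℚ (adjoin ℚ {a}) = Module.finrank ℚ (adjoin ℚ {b})) :
    ∃ h : adjoin ℚ {a} ≤ adjoin ℚ {b},
      Module.finrank (adjoin ℚ {a}) (extendScalars h) = 2 := by
  refine ⟨hle, ?_⟩
  have htower : Module.finrank ℚ (adjoin ℚ {a}) *
      Module.finrank (adjoin ℚ {a}) (extendScalars hle) = Module.finrank ℚ (adjoin ℚ {b}) := by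
    have h1 := Module.finrank_mul_finrank ℚ (adjoin ℚ {a}) (extendScalars hle)
    rw [h1]
    rfl
  have hA : 0 < Module.finrank ℚ (adjoin ℚ {a}) := by omega
  have : Module.finrank ℚ (adjoin ℚ {a}) * 2 =
      Module.finrank ℚ (adjoin ℚ {a}) * Module.finrank (adjoin ℚ {a}) (extendScalars hle) := by
    omega
  exact (Nat.eq_of_mul_eq_mul_left hA this).symm
set_option maxHeartbeats 1000000
set_option synthInstance.maxHeartbeats 400000
open Real IntermediateField

noncomputable def phiR : ℝ →ₐ[ℚ] ℂ := Complex.ofRealAm.restrictScalars ℚ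

lemma mem_K_real {x : ℝ} {z : ℂ} (hz : z ∈ adjoin ℚ {phiR x}) : z.im = 0 := by
  have hmap : (adjoin ℚ {x}).map phiR = adjoin ℚ {phiR x} := by
    rw [adjoin_map, Set.image_singleton]
  rw [← hmap] at hz
  obtain ⟨y, _, rfl⟩ := hz
  simp [phiR]

lemma two_mul_finrank_cos_real (n : ℕ) (hn : 2 < n) (x : ℝ)
    (hx : x = Real.cos (2 * π / n)) :
    2 * Module.finrank ℚ (adjoin ℚ {x}) = n.totient := by
  have hn0 : n ≠ 0 := by omega
  have hnR : (n : ℝ) ≠ 0 := Nat.cast_ne_zero.mpr hn0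
  set ζ : ℂ := Complex.exp (2 * π * Complex.I / n) with hζdef
  have hζ : IsPrimitiveRoot ζ n := Complex.isPrimitiveRoot_exp n hn0
  have hζint : IsIntegral ℚ ζ := (hζ.isIntegral (by omega)).tower_top
  set c : ℂ := phiR x with hc
  -- ζ = exp(θ i) with θ = 2π/n real
  have hζexp : ζ = Complex.exp ((2 * π / n : ℝ) * Complex.I) := by
    rw [hζdef]; push_cast; ring_nf
  have hζim : ζ.im = Real.sin (2 * π / n) := by
    rw [hζexp, Complex.exp_ofReal_mul_I_im]
  have hsinpos : 0 < Real.sin (2 * π / n) := by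
    apply Real.sin_pos_of_pos_of_lt_pi
    · positivity
    · rw [div_lt_iff₀ (by positivity)]
      nlinarith [Real.pi_pos, (show (3:ℝ) ≤ n by exact_mod_cast hn)]
  have hζ0 : ζ ≠ 0 := Complex.exp_ne_zero _
  have hcζ : c = (ζ + ζ⁻¹) / 2 := by
    have h1 : ζ⁻¹ = Complex.exp (-((2 * π / n : ℝ) * Complex.I)) := by
      rw [hζexp, ← Complex.exp_neg]
    have hcoe : c = ((Real.cos (2 * π / n) : ℝ) : ℂ) := by
      rw [hc, hx]; rfl
    rw [hcoe, h1, hζexp,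
      show (-((2 * π / n : ℝ) * Complex.I)) = ((-(2 * π / n) : ℝ) : ℂ) * Complex.I by
        push_cast; ring,
      Complex.exp_mul_I, Complex.exp_mul_I]
    push_cast
    rw [Complex.cos_neg, Complex.sin_neg]
    ring
  set K : IntermediateField ℚ ℂ := adjoin ℚ {c} with hK
  set L : IntermediateField ℚ ℂ := adjoin ℚ {ζ} with hL
  have hζL : ζ ∈ L := mem_adjoin_simple_self ℚ ζ
  have hcL : c ∈ L := by
    rw [hcζ]
    exact div_mem (add_mem hζL (inv_mem hζL)) (by rw [show (2:ℂ) = 1 + 1 by norm_num]; exact add_mem (one_mem L) (one_mem L) : (2:ℂ) ∈ L)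
  have hKL : K ≤ L := by rw [hK, adjoin_simple_le_iff]; exact hcL
  have hLfin : FiniteDimensional ℚ L := adjoin.finiteDimensional hζint
  have hcint : IsIntegral ℚ c := by
    have : IsIntegral ℚ (⟨c, hcL⟩ : L) := IsIntegral.of_finite ℚ _
    exact this.map L.val
  have hfinL : Module.finrank ℚ L = n.totient := by
    rw [hL, adjoin.finrank hζint, ← Polynomial.cyclotomic_eq_minpoly_rat hζ (by omega),
      Polynomial.natDegree_cyclotomic]
  have hζnotK : ζ ∉ K := fun h => by
    have := mem_K_real (x := x) h
    rw [hζim] at this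
    exact hsinpos.ne' this
  have hEeq : extendScalars hKL = adjoin K {ζ} := by
    apply IntermediateField.restrictScalars_injective ℚ
    erw [extendScalars_restrictScalars, adjoin_adjoin_left]
    apply le_antisymm
    · rw [hL, adjoin_le_iff]
      intro z hz
      simp only [Set.mem_singleton_iff] at hz
      subst hz
      exact subset_adjoin ℚ _ (by simp)
    · rw [adjoin_le_iff]
      rintro z (rfl | rfl)
      · exact hcL
      · exact hζL
  have hζKint : IsIntegral K ζ := hζint.tower_top
  have hdeg2 : (minpoly K ζ).natDegree = 2 := by
    set p : Polynomial K := Polynomial.X ^ 2 - Polynomial.C (⟨c, mem_adjoin_simple_self ℚ c⟩ : K) * (2 : Polynomial K) * Polynomial.X + 1 with hp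
    have hproot : Polynomial.aeval ζ p = 0 := by
      rw [hp]
      simp only [map_add, map_sub, map_mul, map_pow, map_one, map_ofNat,
        Polynomial.aeval_X, Polynomial.aeval_C]
      have : (algebraMap K ℂ) (⟨c, mem_adjoin_simple_self ℚ c⟩ : K) = c := rfl
      rw [this, hcζ]
      field_simp
      ring
    have hpdeg : p.natDegree = 2 := by
      rw [hp]
      compute_degree!
    have hpne : p ≠ 0 := fun h => by simp [h] at hpdeg
    have hdvd := minpoly.dvd K ζ hproot
    have hle : (minpoly K ζ).natDegree ≤ 2 := hpdeg ▸ Polynomial.natDegree_le_of_dvd hdvd hpne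
    have hge : 2 ≤ (minpoly K ζ).natDegree := by
      rw [minpoly.two_le_natDegree_iff hζKint]
      rintro ⟨y, hy⟩
      exact hζnotK (hy ▸ y.2)
    omega
  have hfinE : Module.finrank K (extendScalars hKL) = 2 := by
    rw [hEeq, adjoin.finrank hζKint, hdeg2]
  have htower : Module.finrank ℚ K * Module.finrank K (extendScalars hKL) = Module.finrank ℚ L := by
    have h1 := Module.finrank_mul_finrank ℚ K (extendScalars hKL)
    rw [h1]
    rfl
  -- transfer to ℝ
  have hmineq : minpoly ℚ c = minpoly ℚ x :=
    minpoly.algebraMap_eq (algebraMap ℝ ℂ).injective x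
  have hxint : IsIntegral ℚ x :=
    (isIntegral_algebraMap_iff (algebraMap ℝ ℂ).injective).mp hcint
  have hfinKR : Module.finrank ℚ (adjoin ℚ {x}) = Module.finrank ℚ K := by
    rw [adjoin.finrank hxint, hK, adjoin.finrank hcint, hmineq]
  rw [hfinKR]
  rw [hfinE] at htower
  omega

lemma coprime_four_of_odd {m : ℕ} (hm : m % 2 = 1) : Nat.Coprime 4 m := by
  have h2 : Nat.Coprime 2 m := Nat.coprime_two_left.mpr (Nat.odd_iff.mpr hm)
  have := h2.pow_left 2
  norm_num at this
  exact this

lemma totient_four_mul {m : ℕ} (hm : m % 2 = 1) : (4 * m).totient = 2 * m.totient := by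
  rw [Nat.totient_mul (coprime_four_of_odd hm), show Nat.totient 4 = 2 by decide]

lemma totient_two_mul {m : ℕ} (hm : m % 2 = 1) : (2 * m).totient = m.totient := by
  rw [Nat.totient_mul (Nat.coprime_two_left.mpr (Nat.odd_iff.mpr hm)), Nat.totient_two, one_mul]

theorem sin_cos_field_containments (q : ℕ) (hq : 2 < q) (hq4 : q ≠ 4) :
    (8 ∣ q → adjoin ℚ {Real.cos (2 * π / q)} = adjoin ℚ {Real.sin (2 * π / q)}) ∧
    (q % 8 = 4 → ∃ h : adjoin ℚ {Real.sin (2 * π / q)} ≤ adjoin ℚ {Real.cos (2 * π / q)},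
      Module.finrank (adjoin ℚ {Real.sin (2 * π / q)}) (extendScalars h) = 2) ∧
    (¬ (4 ∣ q) → ∃ h : adjoin ℚ {Real.cos (2 * π / q)} ≤ adjoin ℚ {Real.sin (2 * π / q)},
      Module.finrank (adjoin ℚ {Real.cos (2 * π / q)}) (extendScalars h) = 2) := by
  have hq0 : q ≠ 0 := by omega
  refine ⟨?_, ?_, ?_⟩
  · -- case 8 ∣ q
    rintro ⟨m, rfl⟩
    have hm1 : 1 ≤ m := by omega
    have h2 : IsCoprime (2 * (m:ℤ) - 1) 2 := ⟨-1, (m:ℤ), by ring⟩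
    have hmc : IsCoprime (2 * (m:ℤ) - 1) (m:ℤ) := ⟨-1, 2, by ring⟩
    have hco : IsCoprime (2 * (m:ℤ) - 1) (((8 * m : ℕ) : ℤ)) := by
      have := (h2.pow_right (n := 3)).mul_right hmc
      have h8 : ((8 * m : ℕ) : ℤ) = 2 ^ 3 * m := by push_cast; ring
      rwa [h8]
    have hsin := sin_eq_cos' (8 * m) (8 * m) (2 * (m:ℤ) - 1) (by omega) (by omega)
      (by push_cast; ring)
    rw [hsin]
    exact (cos_coprime_eq (2 * (m:ℤ) - 1) (8 * m) (by omega) hco).symm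
  · -- case q % 8 = 4
    intro h8
    obtain ⟨m, rfl, hmo, hm3⟩ : ∃ m, q = 4 * m ∧ m % 2 = 1 ∧ 3 ≤ m :=
      ⟨q / 4, by omega, by omega, by omega⟩
    have hA := two_mul_finrank_cos_real (4 * m) (by omega) _ rfl
    have hApos : 0 < (4 * m).totient := Nat.totient_pos.mpr (by omega)
    have htot : (4 * m).totient = 2 * m.totient := totient_four_mul hmo
    rcases (by omega : m % 4 = 1 ∨ m % 4 = 3) with hm4 | hm4
    · obtain ⟨t, htm, ht1⟩ : ∃ t, m = 4 * t + 1 ∧ 1 ≤ t := ⟨m / 4, by omega, by omega⟩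
      have hmz : ((m:ℕ):ℤ) = 4 * (t:ℤ) + 1 := by exact_mod_cast congrArg (Nat.cast (R := ℤ)) htm
      have hsin := sin_eq_cos' (4 * m) m (t:ℤ) (by omega) (by omega)
        (by push_cast; rw [hmz]; ring)
      have hco : IsCoprime ((t:ℤ)) ((m:ℕ):ℤ) := ⟨-4, 1, by rw [hmz]; ring⟩
      have hBeq := cos_coprime_eq (t:ℤ) m (by omega) hco
      rw [← hsin] at hBeq
      have hB := two_mul_finrank_cos_real m (by omega) _ rfl
      rw [← hBeq] at hB
      have hle := hBeq.le.trans (cos_dvd_le m (4 * m) (by omega) (by omega) ⟨4, by ring⟩)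
      exact index_two hle (by omega) (by omega)
    · obtain ⟨t, htm⟩ : ∃ t, m = 4 * t + 3 := ⟨m / 4, by omega⟩
      have hmz : ((m:ℕ):ℤ) = 4 * (t:ℤ) + 3 := by exact_mod_cast congrArg (Nat.cast (R := ℤ)) htm
      have hsin := sin_eq_cos' (4 * m) (2 * m) (2 * (t:ℤ) + 1) (by omega) (by omega)
        (by push_cast; rw [hmz]; ring)
      have h2 : IsCoprime (2 * (t:ℤ) + 1) 2 := ⟨-1, (t:ℤ) + 1, by ring⟩
      have hmc : IsCoprime (2 * (t:ℤ) + 1) ((m:ℕ):ℤ) := ⟨-2, 1, by rw [hmz]; ring⟩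
      have hco : IsCoprime (2 * (t:ℤ) + 1) (((2 * m : ℕ)):ℤ) := by
        have := h2.mul_right hmc
        have h2m : ((2 * m : ℕ) : ℤ) = 2 * ((m:ℕ):ℤ) := by push_cast; ring
        rwa [h2m]
      have hBeq := cos_coprime_eq (2 * (t:ℤ) + 1) (2 * m) (by omega) hco
      rw [← hsin] at hBeq
      have hB := two_mul_finrank_cos_real (2 * m) (by omega) _ rfl
      rw [← hBeq] at hB
      have htot2 : (2 * m).totient = m.totient := totient_two_mul hmo
      have hle := hBeq.le.trans (cos_dvd_le (2 * m) (4 * m) (by omega) (by omega) ⟨2, by ring⟩)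
      exact index_two hle (by omega) (by omega)
  · -- case ¬ 4 ∣ q
    intro h4
    have hA := two_mul_finrank_cos_real q hq _ rfl
    have hApos : 0 < q.totient := Nat.totient_pos.mpr (by omega)
    rcases (by omega : q % 2 = 1 ∨ q % 4 = 2) with hqo | hq2
    · obtain ⟨s, hsq, hs1⟩ : ∃ s, q = 2 * s + 1 ∧ 1 ≤ s := ⟨q / 2, by omega, by omega⟩
      have hqz : ((q:ℕ):ℤ) = 2 * (s:ℤ) + 1 := by exact_mod_cast congrArg (Nat.cast (R := ℤ)) hsq
      have h2 : IsCoprime (2 * (s:ℤ) - 3) 2 := ⟨-1, (s:ℤ) - 1, by ring⟩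
      have h4' : IsCoprime (2 * (s:ℤ) - 3) 4 := by
        have := h2.pow_right (n := 2); norm_num at this; exact this
      have hqc : IsCoprime (2 * (s:ℤ) - 3) ((q:ℕ):ℤ) := by
        have := h4'.add_mul_left_right 1
        rwa [show (4:ℤ) + (2 * (s:ℤ) - 3) * 1 = ((q:ℕ):ℤ) by rw [hqz]; ring] at this
      have hco : IsCoprime (2 * (s:ℤ) - 3) (((4 * q : ℕ)):ℤ) := by
        have := h4'.mul_right hqc
        rwa [show (4:ℤ) * ((q:ℕ):ℤ) = ((4 * q : ℕ):ℤ) by push_cast; ring] at this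
      have hsin := sin_eq_cos' q (4 * q) (2 * (s:ℤ) - 3) (by omega) (by omega)
        (by push_cast; rw [hqz]; ring)
      have hBeq := cos_coprime_eq (2 * (s:ℤ) - 3) (4 * q) (by omega) hco
      rw [← hsin] at hBeq
      have hB := two_mul_finrank_cos_real (4 * q) (by omega) _ rfl
      rw [← hBeq] at hB
      have htot : (4 * q).totient = 2 * q.totient := totient_four_mul (by omega)
      have hle := (cos_dvd_le q (4 * q) (by omega) (by omega) ⟨4, by ring⟩).trans hBeq.ge
      exact index_two hle (by omega) (by omega)
    · obtain ⟨m, rfl, hmo, hm3⟩ : ∃ m, q = 2 * m ∧ m % 2 = 1 ∧ 3 ≤ m :=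
        ⟨q / 2, by omega, by omega, by omega⟩
      obtain ⟨s, hsm⟩ : ∃ s, m = 2 * s + 1 := ⟨m / 2, by omega⟩
      have hmz : ((m:ℕ):ℤ) = 2 * (s:ℤ) + 1 := by exact_mod_cast congrArg (Nat.cast (R := ℤ)) hsm
      have h2 : IsCoprime ((m:ℤ) - 2) 2 := ⟨-1, (s:ℤ), by rw [show (m:ℤ) = 2*(s:ℤ)+1 from hmz]; ring⟩
      have hmc : IsCoprime ((m:ℤ) - 2) ((m:ℕ):ℤ) := by
        have := h2.add_mul_left_right 1
        rwa [show (2:ℤ) + ((m:ℤ) - 2) * 1 = ((m:ℕ):ℤ) by push_cast; ring] at this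
      have h4' : IsCoprime ((m:ℤ) - 2) 4 := by
        have := h2.pow_right (n := 2); norm_num at this; exact this
      have hco : IsCoprime ((m:ℤ) - 2) (((4 * m : ℕ)):ℤ) := by
        have := h4'.mul_right hmc
        rwa [show (4:ℤ) * ((m:ℕ):ℤ) = ((4 * m : ℕ):ℤ) by push_cast; ring] at this
      have hsin := sin_eq_cos' (2 * m) (4 * m) ((m:ℤ) - 2) (by omega) (by omega)
        (by push_cast; ring)
      have hBeq := cos_coprime_eq ((m:ℤ) - 2) (4 * m) (by omega) hco
      rw [← hsin] at hBeq
      have hB := two_mul_finrank_cos_real (4 * m) (by omega) _ rfl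
      rw [← hBeq] at hB
      have htot : (4 * m).totient = 2 * m.totient := totient_four_mul hmo
      have htot2 : (2 * m).totient = m.totient := totient_two_mul hmo
      have hle := (cos_dvd_le (2 * m) (4 * m) (by omega) (by omega) ⟨2, by ring⟩).trans hBeq.ge
      exact index_two hle (by omega) (by omega)
end

section
/- Let λ = 2cos(π/14), which has minimal polynomial p(x) = x⁶ − 7x⁴ + 14x² − 7 over Q. Then λ⁴ + 4 = ((λ⁴ − 25)/(λ⁴ − 12))², i.e., λ⁴ + 4 is a square in the field Q(λ). -/
open Real Polynomial

noncomputable def pZ : ℤ[X] := X ^ 6 - 7 * X ^ 4 + 14 * X ^ 2 - 7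

lemma pZ_monic : pZ.Monic := by
  unfold pZ; monicity!

lemma pZ_natDegree : pZ.natDegree = 6 := by
  unfold pZ; compute_degree!

lemma pZ_irred : Irreducible pZ := by
  apply irreducible_of_eisenstein_criterion (P := Ideal.span {(7 : ℤ)})
  · rw [Ideal.span_singleton_prime (by norm_num)]; norm_num
  · rw [pZ_monic.leadingCoeff, Ideal.mem_span_singleton]; norm_num
  · intro n hn
    rw [Polynomial.degree_eq_natDegree pZ_monic.ne_zero, pZ_natDegree] at hn
    have hn6 : n < 6 := by exact_mod_cast hn
    rw [Ideal.mem_span_singleton]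
    unfold pZ
    interval_cases n <;>
      simp [coeff_X_pow, coeff_sub, coeff_add, coeff_ofNat_mul] <;>
      norm_num
  · rw [Polynomial.degree_eq_natDegree pZ_monic.ne_zero, pZ_natDegree]; norm_num
  · rw [Ideal.span_singleton_pow, Ideal.mem_span_singleton]
    unfold pZ
    simp [coeff_X_pow, coeff_sub, coeff_add, coeff_ofNat_mul]
  · exact pZ_monic.isPrimitive

lemma pZ_map : pZ.map (algebraMap ℤ ℚ) =
    (X ^ 6 - 7 * X ^ 4 + 14 * X ^ 2 - 7 : ℚ[X]) := by
  unfold pZ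
  simp [Polynomial.map_sub, Polynomial.map_add, Polynomial.map_mul,
    Polynomial.map_pow, Polynomial.map_ofNat]

theorem lambda14_square (lam : ℝ) (hlam : lam = 2 * Real.cos (π / 14)) :
    minpoly ℚ lam = X ^ 6 - 7 * X ^ 4 + 14 * X ^ 2 - 7 ∧
    lam ^ 4 - 12 ≠ 0 ∧
    lam ^ 4 + 4 = ((lam ^ 4 - 25) / (lam ^ 4 - 12)) ^ 2 := by
  set θ : ℝ := π / 14 with hθ
  set c : ℝ := Real.cos θ with hc
  have hpi : (0:ℝ) < π := Real.pi_pos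
  have hcpos : 0 < c := by
    apply Real.cos_pos_of_mem_Ioo
    constructor <;> [linarith; rw [hθ]]
    linarith [Real.pi_pos]
  have h7 : Real.cos (4 * θ + 3 * θ) = 0 := by
    rw [show 4 * θ + 3 * θ = π / 2 by rw [hθ]; ring]
    exact Real.cos_pi_div_two
  have hsub : Real.cos (4 * θ - 3 * θ) = c := by
    rw [show 4 * θ - 3 * θ = θ by ring]
  have hA := Real.cos_add (4 * θ) (3 * θ)
  have hB := Real.cos_sub (4 * θ) (3 * θ)
  have h3 : Real.cos (3 * θ) = 4 * c ^ 3 - 3 * c := Real.cos_three_mul θ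
  have h2 : Real.cos (2 * θ) = 2 * c ^ 2 - 1 := Real.cos_two_mul θ
  have h4 : Real.cos (4 * θ) = 2 * (2 * c ^ 2 - 1) ^ 2 - 1 := by
    rw [show (4:ℝ) * θ = 2 * (2 * θ) by ring, Real.cos_two_mul, h2]
  have hE : c = 2 * (2 * (2 * c ^ 2 - 1) ^ 2 - 1) * (4 * c ^ 3 - 3 * c) := by
    rw [h7, h4, h3] at hA
    rw [hsub, h4, h3] at hB
    linarith
  have hp : lam ^ 6 - 7 * lam ^ 4 + 14 * lam ^ 2 - 7 = 0 := by
    have h0 : c * (lam ^ 6 - 7 * lam ^ 4 + 14 * lam ^ 2 - 7) = 0 := by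
      rw [hlam]; linear_combination -hE
    rcases mul_eq_zero.mp h0 with h | h
    · exact absurd h (ne_of_gt hcpos)
    · exact h
  have hclb : c > 0.974 := by
    have := Real.one_sub_sq_div_two_lt_cos (x := θ) (by positivity)
    have hpi2 : π < 3.15 := by linarith [Real.pi_lt_d2]
    have : 1 - θ ^ 2 / 2 < c := this
    have hθlt : θ < 0.225 := by rw [hθ]; linarith
    nlinarith
  have h12 : lam ^ 4 - 12 ≠ 0 := by
    have hlam4 : lam ^ 4 > 12 := by
      rw [hlam]
      nlinarith [hclb]
    intro h; linarith
  refine ⟨?_, h12, ?_⟩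
  · have hirrQ : Irreducible (pZ.map (algebraMap ℤ ℚ)) :=
      (pZ_monic.irreducible_iff_irreducible_map_fraction_map).mp pZ_irred
    rw [pZ_map] at hirrQ
    symm
    apply minpoly.eq_of_irreducible_of_monic hirrQ
    · simp only [map_sub, map_add, map_mul, map_pow, aeval_X, map_ofNat]
      linear_combination hp
    · have := pZ_monic.map (algebraMap ℤ ℚ)
      rwa [pZ_map] at this
  · field_simp
    ring_nf
    nlinarith [hp, sq_nonneg lam, sq_nonneg (lam^2)]
end

section
/- Let λ = 2cos(π/18), with minimal polynomial x⁶ − 6x⁴ + 9x² − 3 over Q. Let δ = 1 + 4λ⁴. Then √δ = (3δ + 37)/(δ − 33), i.e., δ is a square in Q(λ²) with (3δ + 37)² = δ(δ − 33)² and δ − 33 > 0 gives the appropriate sign. -/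
open Real Polynomial

noncomputable def lamqz : ℤ[X] := X ^ 6 - 6 * X ^ 4 + 9 * X ^ 2 - 3

lemma lamqz_monic : lamqz.Monic := by unfold lamqz; monicity!

lemma lamqz_deg : lamqz.degree = 6 := by unfold lamqz; compute_degree!

lemma lamqz_irred : Irreducible lamqz := by
  apply irreducible_of_eisenstein_criterion (P := Ideal.span {(3 : ℤ)})
  · rw [Ideal.span_singleton_prime (by norm_num)]; norm_num
  · rw [lamqz_monic.leadingCoeff, Ideal.mem_span_singleton]; norm_num
  · intro n hn
    rw [lamqz_deg] at hn
    rw [Ideal.mem_span_singleton]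
    have hn' : n < 6 := by exact_mod_cast hn
    interval_cases n <;> simp [lamqz, coeff_one, coeff_X] <;> decide
  · rw [lamqz_deg]; norm_num
  · rw [Ideal.span_singleton_pow, Ideal.mem_span_singleton]
    simp [lamqz, coeff_one, coeff_X]
  · exact lamqz_monic.isPrimitive

lemma lamq_irred : Irreducible ((X ^ 6 - 6 * X ^ 4 + 9 * X ^ 2 - 3 : ℚ[X])) := by
  have h := (Polynomial.IsPrimitive.Int.irreducible_iff_irreducible_map_cast
    lamqz_monic.isPrimitive).mp lamqz_irred
  have hmap : lamqz.map (Int.castRingHom ℚ) = X ^ 6 - 6 * X ^ 4 + 9 * X ^ 2 - 3 := by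
    simp [lamqz]
  rwa [hmap] at h

lemma lamq_monic : (X ^ 6 - 6 * X ^ 4 + 9 * X ^ 2 - 3 : ℚ[X]).Monic := by monicity!

theorem lambda18_delta_square (lam : ℝ) (hlam : lam = 2 * Real.cos (π / 18))
    (δ : ℝ) (hδ : δ = 1 + 4 * lam ^ 4) :
    minpoly ℚ lam = X ^ 6 - 6 * X ^ 4 + 9 * X ^ 2 - 3 ∧
    Real.sqrt δ = (3 * δ + 37) / (δ - 33) ∧
    (3 * δ + 37) ^ 2 = δ * (δ - 33) ^ 2 ∧
    δ - 33 > 0 := by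
  have h3 : lam ^ 3 - 3 * lam = Real.sqrt 3 := by
    have hc : Real.cos (3 * (π / 18)) = Real.sqrt 3 / 2 := by
      rw [show 3 * (π / 18) = π / 6 by ring, Real.cos_pi_div_six]
    rw [Real.cos_three_mul] at hc
    rw [hlam]; linarith [hc]
  have hs3 : Real.sqrt 3 ^ 2 = 3 := Real.sq_sqrt (by norm_num)
  have hp : lam ^ 6 - 6 * lam ^ 4 + 9 * lam ^ 2 - 3 = 0 := by
    linear_combination (lam ^ 3 - 3 * lam + Real.sqrt 3) * h3 + hs3
  have hlpos : 0 < lam := by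
    rw [hlam]
    have : 0 < Real.cos (π / 18) := by
      apply Real.cos_pos_of_mem_Ioo
      constructor <;> nlinarith [Real.pi_pos]
    linarith
  have hs3pos : (0:ℝ) < Real.sqrt 3 := Real.sqrt_pos.mpr (by norm_num)
  have hl2 : lam ^ 2 > 3 := by nlinarith [h3, hs3pos, hlam, Real.cos_le_one (π/18)]
  have hd33 : δ - 33 > 0 := by nlinarith [hl2]
  have hsq : (3 * δ + 37) ^ 2 = δ * (δ - 33) ^ 2 := by
    rw [hδ]
    linear_combination (-64 * lam ^ 6 - 384 * lam ^ 4 - 576 * lam ^ 2 - 192) * hp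
  have hmin : minpoly ℚ lam = X ^ 6 - 6 * X ^ 4 + 9 * X ^ 2 - 3 := by
    symm
    apply minpoly.eq_of_irreducible_of_monic lamq_irred _ lamq_monic
    simp only [map_sub, map_add, map_mul, map_pow, aeval_X, map_ofNat]
    linear_combination hp
  refine ⟨hmin, ?_, hsq, hd33⟩
  have hx : ((3 * δ + 37) / (δ - 33)) ^ 2 = δ := by
    rw [div_pow, hsq]
    field_simp
  have hxpos : 0 ≤ (3 * δ + 37) / (δ - 33) :=
    div_nonneg (by nlinarith) (by linarith)
  conv_lhs => rw [← hx]
  rw [Real.sqrt_sq hxpos]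
end
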